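/- Let Ψ be a Max-2OR instance with m_1 1-clauses and m_2 2-clauses. Then val_Ψ ≥ (m_1 + m_2 + bias(Ψ))/2. (Lemma 3.10, part 1.) -/
import Mathlib


/-- A `Max-2OR` clause: either a 1-clause (a single literal) or a 2-clause
(disjunction of two literals on distinct variables). A literal on variable `i`
with polarity `b` (`b = true` for `xᵢ`, `b = false` for `¬xᵢ`) evaluates to `σ i == b`. -/
inductive OrClause (n : ℕ) where
  | one (i : Fin n) (b : Bool)
  | two (i : Fin n) (bi : Bool) (j : Fin n) (bj : Bool) (hij : i ≠ j)

/-- Evaluation of a clause under an assignment. -/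
def OrClause.eval {n : ℕ} (σ : Fin n → Bool) : OrClause n → Bool
  | .one i b => σ i == b
  | .two i bi j bj _ => (σ i == bi) || (σ j == bj)

/-- Whether a clause is a 1-clause. -/
def OrClause.isOne {n : ℕ} : OrClause n → Bool
  | .one _ _ => true
  | .two _ _ _ _ _ => false

/-- `m₁`: the number of 1-clauses. -/
def numOne {n : ℕ} (Ψ : List (OrClause n)) : ℕ := Ψ.countP OrClause.isOne

/-- `m₂`: the number of 2-clauses. -/
def numTwo {n : ℕ} (Ψ : List (OrClause n)) : ℕ := Ψ.countP (fun C => !C.isOne)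

/-- The number of clauses of `Ψ` satisfied by `σ`, i.e. `val_Ψ(σ)`. -/
def satCount {n : ℕ} (Ψ : List (OrClause n)) (σ : Fin n → Bool) : ℕ :=
  Ψ.countP (fun C => C.eval σ)

/-- `val_Ψ`: the maximum number of simultaneously satisfiable clauses. -/
def maxVal {n : ℕ} (Ψ : List (OrClause n)) : ℕ :=
  Finset.univ.sup (fun σ : Fin n → Bool => satCount Ψ σ)

/-- `pos_i^{(1)}(Ψ)`: the number of 1-clauses containing the literal `xᵢ`
(`negᵢ^{(1)}` for `¬xᵢ`, according to polarity `b`). -/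
def cnt1 {n : ℕ} (Ψ : List (OrClause n)) (v : Fin n) (b : Bool) : ℕ :=
  (Ψ.map (fun C => match C with
    | .one i b' => if i = v ∧ b' = b then 1 else 0
    | .two _ _ _ _ _ => 0)).sum

/-- `pos_i^{(2)}(Ψ)`: the number of 2-clauses containing the literal `xᵢ`
(`negᵢ^{(2)}` for `¬xᵢ`, according to polarity `b`). -/
def cnt2 {n : ℕ} (Ψ : List (OrClause n)) (v : Fin n) (b : Bool) : ℕ :=
  (Ψ.map (fun C => match C with
    | .one _ _ => 0
    | .two i bi j bj _ => (if i = v ∧ bi = b then 1 else 0)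
                        + (if j = v ∧ bj = b then 1 else 0))).sum

/-- `bias(Ψ) = (1/2) Σᵢ |2 posᵢ⁽¹⁾ + posᵢ⁽²⁾ − 2 negᵢ⁽¹⁾ − negᵢ⁽²⁾|`. -/
noncomputable def bias {n : ℕ} (Ψ : List (OrClause n)) : ℝ :=
  (1/2) * ∑ v : Fin n,
    |2 * (cnt1 Ψ v true : ℝ) + (cnt2 Ψ v true : ℝ)
      - 2 * (cnt1 Ψ v false : ℝ) - (cnt2 Ψ v false : ℝ)|

-- auxiliary
def t1 {n : ℕ} (v : Fin n) (b : Bool) : OrClause n → ℕ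
  | .one i b' => if i = v ∧ b' = b then 1 else 0
  | .two _ _ _ _ _ => 0

def t2 {n : ℕ} (v : Fin n) (b : Bool) : OrClause n → ℕ
  | .one _ _ => 0
  | .two i bi j bj _ => (if i = v ∧ bi = b then 1 else 0) + (if j = v ∧ bj = b then 1 else 0)

lemma cnt1_cons {n : ℕ} (C : OrClause n) (Ψ : List (OrClause n)) (v : Fin n) (b : Bool) :
    cnt1 (C :: Ψ) v b = t1 v b C + cnt1 Ψ v b := by
  cases C <;> simp [cnt1, t1]

lemma cnt2_cons {n : ℕ} (C : OrClause n) (Ψ : List (OrClause n)) (v : Fin n) (b : Bool) :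
    cnt2 (C :: Ψ) v b = t2 v b C + cnt2 Ψ v b := by
  cases C <;> simp [cnt2, t2]

lemma ind_sum {n : ℕ} (i : Fin n) (P : Fin n → Prop) [DecidablePred P] (c : ℕ) :
    ∑ v : Fin n, (if i = v ∧ P v then c else 0) = if P i then c else 0 := by
  rw [Finset.sum_eq_single i]
  · simp
  · intro v _ hv; simp [Ne.symm hv]
  · simp

lemma keyA {n : ℕ} (σ : Fin n → Bool) (Ψ : List (OrClause n)) :
    ∑ v : Fin n, (2 * cnt1 Ψ v (σ v) + cnt2 Ψ v (σ v)) ≤ 2 * satCount Ψ σ := by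
  induction Ψ with
  | nil => simp [cnt1, cnt2, satCount]
  | cons C Ψ ih =>
    have hcons : ∑ v : Fin n, (2 * cnt1 (C :: Ψ) v (σ v) + cnt2 (C :: Ψ) v (σ v))
        = (∑ v : Fin n, (2 * t1 v (σ v) C + t2 v (σ v) C))
          + ∑ v : Fin n, (2 * cnt1 Ψ v (σ v) + cnt2 Ψ v (σ v)) := by
      rw [← Finset.sum_add_distrib]
      apply Finset.sum_congr rfl
      intro v _
      rw [cnt1_cons, cnt2_cons]; ring
    rw [hcons]
    have hsat : satCount (C :: Ψ) σ = (if C.eval σ then 1 else 0) + satCount Ψ σ := by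
      simp [satCount, List.countP_cons]; omega
    rw [hsat, Nat.mul_add]
    have hd : (∑ v : Fin n, (2 * t1 v (σ v) C + t2 v (σ v) C))
        ≤ 2 * (if C.eval σ then 1 else 0) := by
      cases C with
      | one i b =>
        have : ∑ v : Fin n, (2 * t1 v (σ v) (.one i b) + t2 v (σ v) (.one i b))
            = ∑ v : Fin n, (if i = v ∧ b = σ v then 2 else 0) := by
          apply Finset.sum_congr rfl
          intro v _
          simp only [t1, t2]
          split <;> simp
        rw [this, ind_sum]
        simp only [OrClause.eval]
        rcases eq_or_ne b (σ i) with h | h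
        · simp [h]
        · simp [h, Ne.symm h]
      | two i bi j bj hij =>
        have : ∑ v : Fin n, (2 * t1 v (σ v) (.two i bi j bj hij) + t2 v (σ v) (.two i bi j bj hij))
            = (∑ v : Fin n, (if i = v ∧ bi = σ v then 1 else 0))
              + ∑ v : Fin n, (if j = v ∧ bj = σ v then 1 else 0) := by
          rw [← Finset.sum_add_distrib]
          apply Finset.sum_congr rfl
          intro v _
          simp [t1, t2]
        rw [this, ind_sum, ind_sum]
        simp only [OrClause.eval]
        rcases eq_or_ne bi (σ i) with h1 | h1 <;> rcases eq_or_ne bj (σ j) with h2 | h2 <;>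
          simp [h1, h2, Ne.symm, *] <;> omega
    omega
  
lemma keyB {n : ℕ} (Ψ : List (OrClause n)) :
    ∑ v : Fin n, (2 * cnt1 Ψ v true + cnt2 Ψ v true + (2 * cnt1 Ψ v false + cnt2 Ψ v false))
      = 2 * (numOne Ψ + numTwo Ψ) := by
  induction Ψ with
  | nil => simp [cnt1, cnt2, numOne, numTwo]
  | cons C Ψ ih =>
    have hcons : ∀ b, ∑ v : Fin n, (2 * cnt1 (C :: Ψ) v b + cnt2 (C :: Ψ) v b)
        = (∑ v : Fin n, (2 * t1 v b C + t2 v b C))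
          + ∑ v : Fin n, (2 * cnt1 Ψ v b + cnt2 Ψ v b) := by
      intro b
      rw [← Finset.sum_add_distrib]
      apply Finset.sum_congr rfl
      intro v _
      rw [cnt1_cons, cnt2_cons]; ring
    have hsplit : ∀ (f g : Fin n → ℕ), ∑ v : Fin n, (f v + g v) = (∑ v, f v) + ∑ v, g v :=
      fun f g => Finset.sum_add_distrib
    rw [hsplit, hcons true, hcons false]
    rw [hsplit] at ih
    have hC : (∑ v : Fin n, (2 * t1 v true C + t2 v true C))
        + (∑ v : Fin n, (2 * t1 v false C + t2 v false C)) = 2 := by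
      cases C with
      | one i b =>
        have h : ∀ b', ∑ v : Fin n, (2 * t1 v b' (.one i b) + t2 v b' (.one i b))
            = ∑ v : Fin n, (if i = v ∧ b = b' then 2 else 0) := by
          intro b'
          apply Finset.sum_congr rfl
          intro v _
          simp only [t1, t2]
          split <;> simp
        rw [h, h, ind_sum, ind_sum]
        cases b <;> simp
      | two i bi j bj hij =>
        have h : ∀ b', ∑ v : Fin n, (2 * t1 v b' (.two i bi j bj hij) + t2 v b' (.two i bi j bj hij))
            = (∑ v : Fin n, (if i = v ∧ bi = b' then 1 else 0))
              + ∑ v : Fin n, (if j = v ∧ bj = b' then 1 else 0) := by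
          intro b'
          rw [← Finset.sum_add_distrib]
          apply Finset.sum_congr rfl
          intro v _
          simp [t1, t2]
        rw [h, h, ind_sum, ind_sum, ind_sum, ind_sum]
        cases bi <;> cases bj <;> simp
    have h1 : numOne (C :: Ψ) + numTwo (C :: Ψ) = 1 + (numOne Ψ + numTwo Ψ) := by
      cases C <;> simp [numOne, numTwo, OrClause.isOne, List.countP_cons] <;> omega
    omega

/-- Lemma 3.10, part 1: `val_Ψ ≥ (m₁ + m₂ + bias(Ψ))/2`. -/
theorem or_bias_lower_bound_one {n : ℕ} (Ψ : List (OrClause n)) :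
    ((numOne Ψ : ℝ) + (numTwo Ψ : ℝ) + bias Ψ) / 2 ≤ (maxVal Ψ : ℝ) := by
  set σ : Fin n → Bool := fun v =>
    decide (2 * cnt1 Ψ v false + cnt2 Ψ v false ≤ 2 * cnt1 Ψ v true + cnt2 Ψ v true) with hσ
  have hmax : ∀ v, 2 * cnt1 Ψ v (σ v) + cnt2 Ψ v (σ v)
      = max (2 * cnt1 Ψ v true + cnt2 Ψ v true) (2 * cnt1 Ψ v false + cnt2 Ψ v false) := by
    intro v
    rw [hσ]
    rcases le_or_gt (2 * cnt1 Ψ v false + cnt2 Ψ v false) (2 * cnt1 Ψ v true + cnt2 Ψ v true)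
      with h | h
    · have hv : (fun v => decide (2 * cnt1 Ψ v false + cnt2 Ψ v false ≤
          2 * cnt1 Ψ v true + cnt2 Ψ v true)) v = true := by simp [h]
      rw [hv, Nat.max_eq_left h]
    · have hv : (fun v => decide (2 * cnt1 Ψ v false + cnt2 Ψ v false ≤
          2 * cnt1 Ψ v true + cnt2 Ψ v true)) v = false := by simp [not_le.mpr h]
      rw [hv, Nat.max_eq_right h.le]
  have hA := keyA σ Ψ
  have hAR : ∑ v : Fin n, (2 * (cnt1 Ψ v (σ v) : ℝ) + (cnt2 Ψ v (σ v) : ℝ))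
      ≤ 2 * (satCount Ψ σ : ℝ) := by exact_mod_cast hA
  have hBR : ∑ v : Fin n, ((2 * (cnt1 Ψ v true : ℝ) + (cnt2 Ψ v true : ℝ))
        + (2 * (cnt1 Ψ v false : ℝ) + (cnt2 Ψ v false : ℝ)))
      = 2 * ((numOne Ψ : ℝ) + (numTwo Ψ : ℝ)) := by exact_mod_cast keyB Ψ
  have hpt : ∀ v : Fin n,
      2 * (2 * (cnt1 Ψ v (σ v) : ℝ) + (cnt2 Ψ v (σ v) : ℝ))
      = ((2 * (cnt1 Ψ v true : ℝ) + (cnt2 Ψ v true : ℝ))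
          + (2 * (cnt1 Ψ v false : ℝ) + (cnt2 Ψ v false : ℝ)))
        + |2 * (cnt1 Ψ v true : ℝ) + (cnt2 Ψ v true : ℝ)
            - 2 * (cnt1 Ψ v false : ℝ) - (cnt2 Ψ v false : ℝ)| := by
    intro v
    have h' : 2 * (cnt1 Ψ v (σ v) : ℝ) + (cnt2 Ψ v (σ v) : ℝ)
        = max (2 * (cnt1 Ψ v true : ℝ) + (cnt2 Ψ v true : ℝ))
            (2 * (cnt1 Ψ v false : ℝ) + (cnt2 Ψ v false : ℝ)) := by
      have := hmax v
      push_cast [Nat.cast_max] at this ⊢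
      exact_mod_cast this
    rw [h']
    rcases le_total (2 * (cnt1 Ψ v false : ℝ) + (cnt2 Ψ v false : ℝ))
        (2 * (cnt1 Ψ v true : ℝ) + (cnt2 Ψ v true : ℝ)) with h | h
    · rw [max_eq_left h, abs_of_nonneg (by linarith)]; ring
    · rw [max_eq_right h, abs_of_nonpos (by linarith)]; ring
  have hsum : 2 * ∑ v : Fin n, (2 * (cnt1 Ψ v (σ v) : ℝ) + (cnt2 Ψ v (σ v) : ℝ))
      = (∑ v : Fin n, ((2 * (cnt1 Ψ v true : ℝ) + (cnt2 Ψ v true : ℝ))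
          + (2 * (cnt1 Ψ v false : ℝ) + (cnt2 Ψ v false : ℝ))))
        + ∑ v : Fin n, |2 * (cnt1 Ψ v true : ℝ) + (cnt2 Ψ v true : ℝ)
            - 2 * (cnt1 Ψ v false : ℝ) - (cnt2 Ψ v false : ℝ)| := by
    rw [Finset.mul_sum, ← Finset.sum_add_distrib]
    exact Finset.sum_congr rfl fun v _ => hpt v
  have hbias : ∑ v : Fin n, |2 * (cnt1 Ψ v true : ℝ) + (cnt2 Ψ v true : ℝ)
      - 2 * (cnt1 Ψ v false : ℝ) - (cnt2 Ψ v false : ℝ)| = 2 * bias Ψ := by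
    rw [bias]; ring
  have hm : (satCount Ψ σ : ℝ) ≤ (maxVal Ψ : ℝ) := by
    exact_mod_cast Finset.le_sup (f := fun τ : Fin n → Bool => satCount Ψ τ)
      (Finset.mem_univ σ)
  linarith
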